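/- Let P₁, P₂, P₃ be elements of a complex Banach algebra and set 𝓛 = P₁ + P₂ + P₃. Then exp(tP₁)·exp(tP₂)·exp(tP₃) − exp(t𝓛) − t²·E₂ − t³·E₃ = O(t⁴) as t → 0, where E₂ = (1/2)([P₁,P₂] + [P₁,P₃] + [P₂,P₃]) and E₃ = (1/3)[P₁,[P₁,P₂]] + (1/6)[P₂,[P₁,P₂]] + (1/3)[P₁,[P₁,P₃]] + (1/6)[P₃,[P₁,P₃]] + (1/3)[P₂,[P₂,P₃]] + (1/6)[P₃,[P₂,P₃]] + (1/6)[P₁,[P₂,P₃]] − (1/6)[P₃,[P₁,P₂]] + (1/2)[P₁,P₂]·P₁ + (1/2)[P₁,P₂]·P₂ + (1/2)[P₁,P₃]·P₁ + (1/2)[P₁,P₃]·P₃ + (1/2)[P₂,P₃]·P₂ + (1/2)[P₂,P₃]·P₃ + (1/2)(P₁·P₂·P₃ − P₃·P₂·P₁). -/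

import Mathlib

open NormedSpace Asymptotics Filter
open scoped Topology

/-- The ringComm `[X,Y] = X·Y − Y·X` in an associative ring. -/
def ringComm {R : Type*} [Ring R] (X Y : R) : R := X * Y - Y * X

section Aux

variable {𝒜 : Type*} [NormedRing 𝒜] [NormedAlgebra ℂ 𝒜] [CompleteSpace 𝒜]

/-- The cubic Taylor polynomial of `exp (t • X)`. -/
noncomputable def cub3 (X : 𝒜) (t : ℝ) : 𝒜 :=
  1 + (t : ℂ) • X + ((t : ℂ) ^ 2) • ((1 / 2 : ℂ) • (X * X))
    + ((t : ℂ) ^ 3) • ((1 / 6 : ℂ) • (X * X * X))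

lemma partialSum_four (X : 𝒜) (t : ℝ) :
    (expSeries ℂ 𝒜).partialSum 4 ((t : ℂ) • X) = cub3 X t := by
  simp only [FormalMultilinearSeries.partialSum, Finset.sum_range_succ, Finset.sum_range_zero,
    expSeries_apply_eq, cub3, smul_pow, Nat.factorial, pow_succ, pow_zero, one_mul, mul_assoc]
  match_scalars <;> push_cast <;> ring

lemma exp_taylor4 (X : 𝒜) :
    (fun t : ℝ => exp ((t : ℂ) • X) - cub3 X t) =O[𝓝 (0 : ℝ)] fun t => t ^ 4 := by
  have h0 : HasFPowerSeriesAt exp (expSeries ℂ 𝒜) 0 := exp_hasFPowerSeriesAt_zero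
  have h1 := h0.isBigO_sub_partialSum_pow 4
  have hcont : Filter.Tendsto (fun t : ℝ => (t : ℂ) • X) (𝓝 0) (𝓝 0) := by
    have : Continuous fun t : ℝ => (t : ℂ) • X := by continuity
    simpa using this.tendsto 0
  have h2 := h1.comp_tendsto hcont
  have h3 : (fun t : ℝ => ‖(t : ℂ) • X‖ ^ 4) =O[𝓝 (0 : ℝ)] fun t => t ^ 4 := by
    refine IsBigO.of_bound (‖X‖ ^ 4) ?_
    filter_upwards with t
    have : ‖(t : ℂ) • X‖ ≤ |t| * ‖X‖ := by
      simpa [Complex.norm_real] using _root_.norm_smul_le ((t : ℂ)) X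
    calc ‖‖(t : ℂ) • X‖ ^ 4‖ = ‖(t : ℂ) • X‖ ^ 4 := by
            simp [abs_of_nonneg (pow_nonneg (norm_nonneg _) 4)]
      _ ≤ (|t| * ‖X‖) ^ 4 := by
            exact pow_le_pow_left₀ (norm_nonneg _) this 4
      _ = ‖X‖ ^ 4 * ‖t ^ 4‖ := by
            rw [mul_pow]; rw [mul_comm]; congr 1
            simp [abs_pow]
  have h4 := h2.trans h3
  refine h4.congr_left fun t => ?_
  simp only [Function.comp, zero_add, partialSum_four]

lemma exp_isBigO_one (X : 𝒜) :
    (fun t : ℝ => exp ((t : ℂ) • X)) =O[𝓝 (0 : ℝ)] (fun _ => (1 : ℝ)) := by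
  have : Continuous fun t : ℝ => exp ((t : ℂ) • X) :=
    (show Continuous (exp : 𝒜 → 𝒜) by
      rw [← continuousOn_univ, ← Metric.eball_top_eq_univ (0 : 𝒜), ←
        expSeries_radius_eq_top ℂ 𝒜]
      exact continuousOn_exp (𝕂 := ℂ)).comp (by continuity)
  exact (this.tendsto 0).isBigO_one ℝ

lemma cub3_isBigO_one (X : 𝒜) :
    (fun t : ℝ => cub3 X t) =O[𝓝 (0 : ℝ)] (fun _ => (1 : ℝ)) := by
  have : Continuous fun t : ℝ => cub3 X t := by unfold cub3; continuity
  exact (this.tendsto 0).isBigO_one ℝ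

lemma pow_smul_isBigO {k : ℕ} (hk : 4 ≤ k) (C : 𝒜) :
    (fun t : ℝ => ((t : ℂ)) ^ k • C) =O[𝓝 (0 : ℝ)] fun t => t ^ 4 := by
  refine IsBigO.of_bound ‖C‖ ?_
  have h1 : ∀ᶠ t : ℝ in 𝓝 0, |t| ≤ 1 := by
    have := Metric.ball_mem_nhds (0 : ℝ) one_pos
    filter_upwards [this] with t ht
    have h := Metric.mem_ball.mp ht
    rw [Real.dist_eq, sub_zero] at h
    exact h.le
  filter_upwards [h1] with t ht
  have habs : ‖((t : ℂ)) ^ k • C‖ = |t| ^ k * ‖C‖ := by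
    rw [norm_smul, norm_pow, Complex.norm_real, Real.norm_eq_abs]
  rw [habs]
  have h2 : |t| ^ k ≤ |t| ^ 4 := pow_le_pow_of_le_one (abs_nonneg t) ht hk
  calc |t| ^ k * ‖C‖ ≤ |t| ^ 4 * ‖C‖ := by
        exact mul_le_mul_of_nonneg_right h2 (norm_nonneg _)
    _ = ‖C‖ * ‖t ^ 4‖ := by rw [mul_comm]; congr 1; simp [abs_pow]

end Aux


section Key

variable {𝒜 : Type*} [NormedRing 𝒜] [NormedAlgebra ℂ 𝒜] [CompleteSpace 𝒜]

/-- The explicit order-`≥ 4` tail of the polynomial part. -/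
noncomputable def tail3 (P₁ P₂ P₃ : 𝒜) (t : ℝ) : 𝒜 :=
      ((t : ℂ)) ^ 4 • ((1 / 6 : ℂ) • (P₁ * P₁ * P₁ * P₂)
        + (1 / 6 : ℂ) • (P₁ * P₁ * P₁ * P₃)
        + (1 / 4 : ℂ) • (P₁ * P₁ * P₂ * P₂)
        + (1 / 2 : ℂ) • (P₁ * P₁ * P₂ * P₃)
        + (1 / 4 : ℂ) • (P₁ * P₁ * P₃ * P₃)
        + (1 / 6 : ℂ) • (P₁ * P₂ * P₂ * P₂)
        + (1 / 2 : ℂ) • (P₁ * P₂ * P₂ * P₃)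
        + (1 / 2 : ℂ) • (P₁ * P₂ * P₃ * P₃)
        + (1 / 6 : ℂ) • (P₁ * P₃ * P₃ * P₃)
        + (1 / 6 : ℂ) • (P₂ * P₂ * P₂ * P₃)
        + (1 / 4 : ℂ) • (P₂ * P₂ * P₃ * P₃)
        + (1 / 6 : ℂ) • (P₂ * P₃ * P₃ * P₃))
    + ((t : ℂ)) ^ 5 • ((1 / 12 : ℂ) • (P₁ * P₁ * P₁ * P₂ * P₂)
        + (1 / 6 : ℂ) • (P₁ * P₁ * P₁ * P₂ * P₃)
        + (1 / 12 : ℂ) • (P₁ * P₁ * P₁ * P₃ * P₃)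
        + (1 / 12 : ℂ) • (P₁ * P₁ * P₂ * P₂ * P₂)
        + (1 / 4 : ℂ) • (P₁ * P₁ * P₂ * P₂ * P₃)
        + (1 / 4 : ℂ) • (P₁ * P₁ * P₂ * P₃ * P₃)
        + (1 / 12 : ℂ) • (P₁ * P₁ * P₃ * P₃ * P₃)
        + (1 / 6 : ℂ) • (P₁ * P₂ * P₂ * P₂ * P₃)
        + (1 / 4 : ℂ) • (P₁ * P₂ * P₂ * P₃ * P₃)
        + (1 / 6 : ℂ) • (P₁ * P₂ * P₃ * P₃ * P₃)
        + (1 / 12 : ℂ) • (P₂ * P₂ * P₂ * P₃ * P₃)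
        + (1 / 12 : ℂ) • (P₂ * P₂ * P₃ * P₃ * P₃))
    + ((t : ℂ)) ^ 6 • ((1 / 36 : ℂ) • (P₁ * P₁ * P₁ * P₂ * P₂ * P₂)
        + (1 / 12 : ℂ) • (P₁ * P₁ * P₁ * P₂ * P₂ * P₃)
        + (1 / 12 : ℂ) • (P₁ * P₁ * P₁ * P₂ * P₃ * P₃)
        + (1 / 36 : ℂ) • (P₁ * P₁ * P₁ * P₃ * P₃ * P₃)
        + (1 / 12 : ℂ) • (P₁ * P₁ * P₂ * P₂ * P₂ * P₃)
        + (1 / 8 : ℂ) • (P₁ * P₁ * P₂ * P₂ * P₃ * P₃)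
        + (1 / 12 : ℂ) • (P₁ * P₁ * P₂ * P₃ * P₃ * P₃)
        + (1 / 12 : ℂ) • (P₁ * P₂ * P₂ * P₂ * P₃ * P₃)
        + (1 / 12 : ℂ) • (P₁ * P₂ * P₂ * P₃ * P₃ * P₃)
        + (1 / 36 : ℂ) • (P₂ * P₂ * P₂ * P₃ * P₃ * P₃))
    + ((t : ℂ)) ^ 7 • ((1 / 36 : ℂ) • (P₁ * P₁ * P₁ * P₂ * P₂ * P₂ * P₃)
        + (1 / 24 : ℂ) • (P₁ * P₁ * P₁ * P₂ * P₂ * P₃ * P₃)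
        + (1 / 36 : ℂ) • (P₁ * P₁ * P₁ * P₂ * P₃ * P₃ * P₃)
        + (1 / 24 : ℂ) • (P₁ * P₁ * P₂ * P₂ * P₂ * P₃ * P₃)
        + (1 / 24 : ℂ) • (P₁ * P₁ * P₂ * P₂ * P₃ * P₃ * P₃)
        + (1 / 36 : ℂ) • (P₁ * P₂ * P₂ * P₂ * P₃ * P₃ * P₃))
    + ((t : ℂ)) ^ 8 • ((1 / 72 : ℂ) • (P₁ * P₁ * P₁ * P₂ * P₂ * P₂ * P₃ * P₃)
        + (1 / 72 : ℂ) • (P₁ * P₁ * P₁ * P₂ * P₂ * P₃ * P₃ * P₃)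
        + (1 / 72 : ℂ) • (P₁ * P₁ * P₂ * P₂ * P₂ * P₃ * P₃ * P₃))
    + ((t : ℂ)) ^ 9 • ((1 / 216 : ℂ) • (P₁ * P₁ * P₁ * P₂ * P₂ * P₂ * P₃ * P₃ * P₃))

lemma key_identity (P₁ P₂ P₃ : 𝒜) (t : ℝ) :
    cub3 P₁ t * cub3 P₂ t * cub3 P₃ t - cub3 (P₁ + P₂ + P₃) t
      - ((t : ℂ) ^ 2) • ((1 / 2 : ℂ) • (ringComm P₁ P₂ + ringComm P₁ P₃ + ringComm P₂ P₃))
      - ((t : ℂ) ^ 3) • ((1 / 3 : ℂ) • ringComm P₁ (ringComm P₁ P₂)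
      + (1 / 6 : ℂ) • ringComm P₂ (ringComm P₁ P₂)
      + (1 / 3 : ℂ) • ringComm P₁ (ringComm P₁ P₃)
      + (1 / 6 : ℂ) • ringComm P₃ (ringComm P₁ P₃)
      + (1 / 3 : ℂ) • ringComm P₂ (ringComm P₂ P₃)
      + (1 / 6 : ℂ) • ringComm P₃ (ringComm P₂ P₃)
      + (1 / 6 : ℂ) • ringComm P₁ (ringComm P₂ P₃)
      - (1 / 6 : ℂ) • ringComm P₃ (ringComm P₁ P₂)
      + (1 / 2 : ℂ) • (ringComm P₁ P₂ * P₁)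
      + (1 / 2 : ℂ) • (ringComm P₁ P₂ * P₂)
      + (1 / 2 : ℂ) • (ringComm P₁ P₃ * P₁)
      + (1 / 2 : ℂ) • (ringComm P₁ P₃ * P₃)
      + (1 / 2 : ℂ) • (ringComm P₂ P₃ * P₂)
      + (1 / 2 : ℂ) • (ringComm P₂ P₃ * P₃)
      + (1 / 2 : ℂ) • (P₁ * P₂ * P₃ - P₃ * P₂ * P₁))
    = tail3 P₁ P₂ P₃ t := by
  simp only [cub3, tail3, ringComm]
  simp only [mul_add, add_mul, mul_sub, sub_mul, smul_mul_assoc, mul_smul_comm, smul_smul,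
    smul_sub, smul_add, mul_one, one_mul, mul_assoc]
  match_scalars <;> ring

lemma tail3_isBigO (P₁ P₂ P₃ : 𝒜) :
    (fun t : ℝ => tail3 P₁ P₂ P₃ t) =O[𝓝 (0 : ℝ)] fun t => t ^ 4 := by
  unfold tail3
  exact ((((( (pow_smul_isBigO (by norm_num) _).add
    (pow_smul_isBigO (by norm_num) _)).add
    (pow_smul_isBigO (by norm_num) _)).add
    (pow_smul_isBigO (by norm_num) _)).add
    (pow_smul_isBigO (by norm_num) _)).add
    (pow_smul_isBigO (by norm_num) _))

end Key


/-- For `P₁, P₂, P₃` in a complex Banach algebra with `𝓛 = P₁ + P₂ + P₃`,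
`exp(tP₁)exp(tP₂)exp(tP₃) − exp(t𝓛) − t²E₂ − t³E₃ = O(t⁴)` as `t → 0`, with `E₂, E₃`
as given in the paper. -/
theorem splitting_three_E3 {𝒜 : Type*} [NormedRing 𝒜] [NormedAlgebra ℂ 𝒜]
    [CompleteSpace 𝒜] (P₁ P₂ P₃ : 𝒜) (𝓛 : 𝒜) (h𝓛 : 𝓛 = P₁ + P₂ + P₃)
    (E₂ E₃ : 𝒜)
    (hE₂ : E₂ = (1 / 2 : ℂ) • (ringComm P₁ P₂ + ringComm P₁ P₃ + ringComm P₂ P₃))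
    (hE₃ : E₃ =
        (1 / 3 : ℂ) • ringComm P₁ (ringComm P₁ P₂)
      + (1 / 6 : ℂ) • ringComm P₂ (ringComm P₁ P₂)
      + (1 / 3 : ℂ) • ringComm P₁ (ringComm P₁ P₃)
      + (1 / 6 : ℂ) • ringComm P₃ (ringComm P₁ P₃)
      + (1 / 3 : ℂ) • ringComm P₂ (ringComm P₂ P₃)
      + (1 / 6 : ℂ) • ringComm P₃ (ringComm P₂ P₃)
      + (1 / 6 : ℂ) • ringComm P₁ (ringComm P₂ P₃)
      - (1 / 6 : ℂ) • ringComm P₃ (ringComm P₁ P₂)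
      + (1 / 2 : ℂ) • (ringComm P₁ P₂ * P₁)
      + (1 / 2 : ℂ) • (ringComm P₁ P₂ * P₂)
      + (1 / 2 : ℂ) • (ringComm P₁ P₃ * P₁)
      + (1 / 2 : ℂ) • (ringComm P₁ P₃ * P₃)
      + (1 / 2 : ℂ) • (ringComm P₂ P₃ * P₂)
      + (1 / 2 : ℂ) • (ringComm P₂ P₃ * P₃)
      + (1 / 2 : ℂ) • (P₁ * P₂ * P₃ - P₃ * P₂ * P₁)) :
    (fun t : ℝ => exp ((t : ℂ) • P₁) * exp ((t : ℂ) • P₂) * exp ((t : ℂ) • P₃)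
        - exp ((t : ℂ) • 𝓛) - ((t : ℂ) ^ 2) • E₂ - ((t : ℂ) ^ 3) • E₃)
      =O[𝓝 (0 : ℝ)] fun t : ℝ => t ^ 4 := by
  subst h𝓛 hE₂ hE₃
  have decomp : ∀ t : ℝ,
      exp ((t : ℂ) • P₁) * exp ((t : ℂ) • P₂) * exp ((t : ℂ) • P₃)
        - exp ((t : ℂ) • (P₁ + P₂ + P₃))
        - ((t : ℂ) ^ 2) • ((1 / 2 : ℂ) • (ringComm P₁ P₂ + ringComm P₁ P₃ + ringComm P₂ P₃))
        - ((t : ℂ) ^ 3) • ((1 / 3 : ℂ) • ringComm P₁ (ringComm P₁ P₂)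
      + (1 / 6 : ℂ) • ringComm P₂ (ringComm P₁ P₂)
      + (1 / 3 : ℂ) • ringComm P₁ (ringComm P₁ P₃)
      + (1 / 6 : ℂ) • ringComm P₃ (ringComm P₁ P₃)
      + (1 / 3 : ℂ) • ringComm P₂ (ringComm P₂ P₃)
      + (1 / 6 : ℂ) • ringComm P₃ (ringComm P₂ P₃)
      + (1 / 6 : ℂ) • ringComm P₁ (ringComm P₂ P₃)
      - (1 / 6 : ℂ) • ringComm P₃ (ringComm P₁ P₂)
      + (1 / 2 : ℂ) • (ringComm P₁ P₂ * P₁)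
      + (1 / 2 : ℂ) • (ringComm P₁ P₂ * P₂)
      + (1 / 2 : ℂ) • (ringComm P₁ P₃ * P₁)
      + (1 / 2 : ℂ) • (ringComm P₁ P₃ * P₃)
      + (1 / 2 : ℂ) • (ringComm P₂ P₃ * P₂)
      + (1 / 2 : ℂ) • (ringComm P₂ P₃ * P₃)
      + (1 / 2 : ℂ) • (P₁ * P₂ * P₃ - P₃ * P₂ * P₁))
      = (exp ((t : ℂ) • P₁) - cub3 P₁ t) * exp ((t : ℂ) • P₂) * exp ((t : ℂ) • P₃)
        + cub3 P₁ t * ((exp ((t : ℂ) • P₂) - cub3 P₂ t) * exp ((t : ℂ) • P₃))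
        + cub3 P₁ t * (cub3 P₂ t * (exp ((t : ℂ) • P₃) - cub3 P₃ t))
        - (exp ((t : ℂ) • (P₁ + P₂ + P₃)) - cub3 (P₁ + P₂ + P₃) t)
        + tail3 P₁ P₂ P₃ t := by
    intro t
    rw [← key_identity P₁ P₂ P₃ t]
    noncomm_ring
  have h1 : (fun t : ℝ => (exp ((t : ℂ) • P₁) - cub3 P₁ t) * exp ((t : ℂ) • P₂)
      * exp ((t : ℂ) • P₃)) =O[𝓝 (0 : ℝ)] fun t => t ^ 4 := by
    have := ((exp_taylor4 P₁).mul (exp_isBigO_one P₂)).mul (exp_isBigO_one P₃)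
    simpa using this
  have h2 : (fun t : ℝ => cub3 P₁ t * ((exp ((t : ℂ) • P₂) - cub3 P₂ t)
      * exp ((t : ℂ) • P₃))) =O[𝓝 (0 : ℝ)] fun t => t ^ 4 := by
    have := (cub3_isBigO_one P₁).mul ((exp_taylor4 P₂).mul (exp_isBigO_one P₃))
    simpa using this
  have h3 : (fun t : ℝ => cub3 P₁ t * (cub3 P₂ t * (exp ((t : ℂ) • P₃) - cub3 P₃ t)))
      =O[𝓝 (0 : ℝ)] fun t => t ^ 4 := by
    have := (cub3_isBigO_one P₁).mul ((cub3_isBigO_one P₂).mul (exp_taylor4 P₃))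
    simpa using this
  have h4 := exp_taylor4 (P₁ + P₂ + P₃)
  have h5 := tail3_isBigO P₁ P₂ P₃
  have := (((h1.add h2).add h3).sub h4).add h5
  exact this.congr' (Filter.Eventually.of_forall fun t => (decomp t).symm)
    Filter.EventuallyEq.rfl
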